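/- arXiv:1112.1032 — 2 statements merged into one kernel-verified Lean document; each statement's English description precedes it below -/
import Mathlib

section
/- Let (w_n)_{n≥0} be integers with w_n ≥ 1 and (a_{n,j})_{1≤j≤w_n−1} nonnegative integers; define h₀ = 1, h_{n+1} = w_n h_n + ∑_{j=1}^{w_n−1} a_{n,j}, s_n(0) = 0, s_n(k) = a_{n,1}+⋯+a_{n,k} for 1 ≤ k < w_n, and P_n(θ) = w_n^{−1/2} ∑_{k=0}^{w_n−1} e((k h_n + s_n(k))θ). Then for every n ≥ 1 the map (k₁,…,k_n) ↦ ∑_{j=1}^n (k_j h_j + s_j(k_j)), defined for 0 ≤ k_j ≤ w_j − 1, is injective, and consequently ∫₀¹ ∏_{j=1}^n |P_j(θ)|² dθ = 1. -/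
open Finset intervalIntegral

/-- `e θ = e^{2πiθ}`. -/
noncomputable def e (θ : ℝ) : ℂ := Complex.exp (2 * Real.pi * Complex.I * θ)

lemma e_conj (x : ℝ) : (starRingEnd ℂ) (e x) = e (-x) := by
  unfold e
  rw [← Complex.exp_conj]
  congr 1
  simp [Complex.ext_iff]

lemma continuous_e_mul (x : ℝ) : Continuous fun θ : ℝ => e (x * θ) := by
  unfold e
  fun_prop

lemma integral_e (m m' : ℕ) :
    (∫ θ in (0:ℝ)..1, e (m * θ) * (starRingEnd ℂ) (e (m' * θ)))
      = if m = m' then 1 else 0 := by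
  have hrw : ∀ θ : ℝ, e (m * θ) * (starRingEnd ℂ) (e (m' * θ))
      = Complex.exp ((2 * Real.pi * Complex.I * ((m:ℂ) - m')) * θ) := by
    intro θ
    rw [e_conj]
    unfold e
    rw [← Complex.exp_add]
    congr 1
    push_cast
    ring
  rw [intervalIntegral.integral_congr (g := fun θ : ℝ =>
      Complex.exp ((2 * Real.pi * Complex.I * ((m:ℂ) - m')) * θ))
      (fun θ _ => hrw θ)]
  by_cases hmm : m = m'
  · subst hmm
    simp
  · rw [if_neg hmm]
    have hc : (2 * Real.pi * Complex.I * ((m:ℂ) - m')) ≠ 0 := by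
      have : ((m:ℂ) - m') ≠ 0 := by
        intro hz
        apply hmm
        have : (m:ℂ) = m' := by linear_combination hz
        exact_mod_cast this
      simp [Real.pi_ne_zero, Complex.I_ne_zero, this, Complex.ofReal_ne_zero]
    rw [integral_exp_mul_complex hc]
    have h1 : Complex.exp (2 * Real.pi * Complex.I * ((m:ℂ) - m') * (1:ℝ)) = 1 := by
      have := Complex.exp_int_mul_two_pi_mul_I ((m:ℤ) - m')
      rw [← this]
      congr 1
      push_cast
      ring
    have h0 : Complex.exp (2 * Real.pi * Complex.I * ((m:ℂ) - m') * (0:ℝ)) = 1 := by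
      simp
    rw [h1, h0]
    simp

section
variable (w : ℕ → ℕ) (hw : ∀ n, 1 ≤ w n) (a : ℕ → ℕ → ℕ)
    (h : ℕ → ℕ) (h0 : h 0 = 1)
    (hrec : ∀ n, h (n + 1) = w n * h n + ∑ j ∈ Finset.Icc 1 (w n - 1), a n j)
    (s : ℕ → ℕ → ℕ) (hs : ∀ n k, s n k = ∑ j ∈ Finset.Icc 1 k, a n j)

set_option linter.unusedSectionVars false

include hw h0 hrec hs

lemma hh1 : ∀ j, 1 ≤ h j := by
  intro j
  induction j with
  | zero => omega
  | succ m ih =>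
    have h1 := hrec m
    have h2 : 1 * 1 ≤ w m * h m := Nat.mul_le_mul (hw m) ih
    omega

lemma hsmono : ∀ j k k', k ≤ k' → s j k ≤ s j k' := by
  intro j k k' hkk
  rw [hs, hs]
  exact Finset.sum_le_sum_of_subset (Finset.Icc_subset_Icc_right hkk)

lemma fmono : ∀ j k k', k < k' →
    (k * h j + s j k) + h j ≤ k' * h j + s j k' := by
  intro j k k' hkk
  have h1 : s j k ≤ s j k' := hsmono w hw a h h0 hrec s hs j k k' hkk.le
  have h2 : (k + 1) * h j ≤ k' * h j := Nat.mul_le_mul_right _ hkk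
  nlinarith

lemma ftop : ∀ j, ((w j - 1) * h j + s j (w j - 1)) + h j = h (j + 1) := by
  intro j
  have hw1 := hw j
  have h2 : (w j - 1) * h j + h j = w j * h j := by
    have h3 : w j - 1 + 1 = w j := by omega
    calc (w j - 1) * h j + h j = (w j - 1 + 1) * h j := by ring
    _ = w j * h j := by rw [h3]
  rw [hrec j, hs]
  omega

lemma flt : ∀ j k, k < w j → (k * h j + s j k) + h j ≤ h (j + 1) := by
  intro j k hk
  rcases eq_or_lt_of_le (Nat.le_sub_one_of_lt hk) with heq | hlt
  · rw [heq]; exact (ftop w hw a h h0 hrec s hs j).le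
  · have h1 := fmono w hw a h h0 hrec s hs j k (w j - 1) hlt
    have h2 := ftop w hw a h h0 hrec s hs j
    omega

lemma sum_lt : ∀ m (k : ℕ → ℕ), (∀ j, j < m → k j < w (j + 1)) →
    (∑ j ∈ range m, (k j * h (j + 1) + s (j + 1) (k j))) + h 1 ≤ h (m + 1) := by
  intro m
  induction m with
  | zero => simp
  | succ m ih =>
    intro k hk
    rw [Finset.sum_range_succ]
    have h1 := ih k (fun j hj => hk j (by omega))
    have h2 := flt w hw a h h0 hrec s hs (m + 1) (k m) (hk m (by omega))
    omega

lemma inj_aux : ∀ m (k k' : ℕ → ℕ), (∀ j, j < m → k j < w (j + 1)) →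
    (∀ j, j < m → k' j < w (j + 1)) →
    (∑ j ∈ range m, (k j * h (j + 1) + s (j + 1) (k j)))
      = (∑ j ∈ range m, (k' j * h (j + 1) + s (j + 1) (k' j))) →
    ∀ j, j < m → k j = k' j := by
  intro m
  induction m with
  | zero => intro _ _ _ _ _ j hj; omega
  | succ m ih =>
    intro k k' hk hk' heq
    rw [Finset.sum_range_succ, Finset.sum_range_succ] at heq
    have hb := sum_lt w hw a h h0 hrec s hs m k (fun j hj => hk j (by omega))
    have hb' := sum_lt w hw a h h0 hrec s hs m k' (fun j hj => hk' j (by omega))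
    have h1 := hh1 w hw a h h0 hrec s hs 1
    have htri : k m = k' m := by
      rcases Nat.lt_trichotomy (k m) (k' m) with hlt | heq2 | hgt
      · have := fmono w hw a h h0 hrec s hs (m + 1) (k m) (k' m) hlt
        omega
      · exact heq2
      · have := fmono w hw a h h0 hrec s hs (m + 1) (k' m) (k m) hgt
        omega
    have hsum : (∑ j ∈ range m, (k j * h (j + 1) + s (j + 1) (k j)))
        = (∑ j ∈ range m, (k' j * h (j + 1) + s (j + 1) (k' j))) := by
      rw [htri] at heq; omega
    intro j hj
    rcases Nat.lt_or_ge j m with hjm | hjm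
    · exact ih k k' (fun j hj => hk j (by omega)) (fun j hj => hk' j (by omega)) hsum j hjm
    · have : j = m := by omega
      rw [this]; exact htri

end

/-- Distinctness of the Riesz-product frequencies and the normalization (0.14):
the map `(k₁,…,k_n) ↦ ∑_{j=1}^n (k_j h_j + s_j(k_j))` (with `0 ≤ k_j ≤ w_j − 1`)
is injective, and `∫₀¹ ∏_{j=1}^n |P_j(θ)|² dθ = 1`. -/
theorem stmt_2 (w : ℕ → ℕ) (hw : ∀ n, 1 ≤ w n) (a : ℕ → ℕ → ℕ)
    (h : ℕ → ℕ) (h0 : h 0 = 1)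
    (hrec : ∀ n, h (n + 1) = w n * h n + ∑ j ∈ Finset.Icc 1 (w n - 1), a n j)
    (s : ℕ → ℕ → ℕ) (hs : ∀ n k, s n k = ∑ j ∈ Finset.Icc 1 k, a n j)
    (P : ℕ → ℝ → ℂ)
    (hP : ∀ n θ, P n θ =
      (1 / (Real.sqrt (w n) : ℂ)) *
        ∑ k ∈ Finset.range (w n), e ((k * h n + s n k) * θ))
    (n : ℕ) (hn : 1 ≤ n) :
    Function.Injective (fun k : (j : Fin n) → Fin (w (j.1 + 1)) =>
      ∑ j : Fin n, ((k j : ℕ) * h (j.1 + 1) + s (j.1 + 1) (k j))) ∧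
    (∫ θ in (0:ℝ)..1, ∏ j ∈ Finset.Icc 1 n, ‖P j θ‖ ^ 2) = 1 := by
  -- the injectivity part
  have hfin : ∀ (k : (j : Fin n) → Fin (w (j.1 + 1))),
      (∑ j : Fin n, ((k j : ℕ) * h (j.1 + 1) + s (j.1 + 1) (k j)))
      = ∑ j ∈ range n, ((fun i => if hi : i < n then ((k ⟨i, hi⟩ : ℕ)) else 0) j * h (j + 1)
          + s (j + 1) ((fun i => if hi : i < n then ((k ⟨i, hi⟩ : ℕ)) else 0) j)) := by
    intro k
    rw [← Fin.sum_univ_eq_sum_range]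
    exact Finset.sum_congr rfl (fun j _ => by simp [j.2])
  have hinj : Function.Injective (fun k : (j : Fin n) → Fin (w (j.1 + 1)) =>
      ∑ j : Fin n, ((k j : ℕ) * h (j.1 + 1) + s (j.1 + 1) (k j))) := by
    intro k k' heq
    simp only at heq
    rw [hfin k, hfin k'] at heq
    have := inj_aux w hw a h h0 hrec s hs n _ _
      (fun j hj => by simp only [dif_pos hj]; exact (k ⟨j, hj⟩).2)
      (fun j hj => by simp only [dif_pos hj]; exact (k' ⟨j, hj⟩).2) heq
    funext j
    have := this j.1 j.2
    simp only [dif_pos j.2] at this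
    exact Fin.ext this
  refine ⟨hinj, ?_⟩
  -- the integral part
  set F : ((j : Fin n) → Fin (w (j.1 + 1))) → ℕ := fun p =>
    ∑ j : Fin n, ((p j : ℕ) * h (j.1 + 1) + s (j.1 + 1) (p j)) with hF
  set r : ℝ := ∏ j : Fin n, (1 / Real.sqrt (w (j.1 + 1))) with hrdef
  set W : ℝ := ∏ j : Fin n, (w (j.1 + 1) : ℝ) with hWdef
  have hWpos : 0 < W := Finset.prod_pos (fun j _ => by
    exact_mod_cast Nat.lt_of_lt_of_le Nat.zero_lt_one (hw (j.1 + 1)))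
  have hr2 : r ^ 2 = W⁻¹ := by
    rw [hrdef, hWdef, ← Finset.prod_pow, ← Finset.prod_inv_distrib]
    refine Finset.prod_congr rfl (fun j _ => ?_)
    rw [div_pow, one_pow, Real.sq_sqrt (by positivity)]
    exact one_div _
  -- the product formula
  have hprod : ∀ θ : ℝ, ∏ j ∈ Finset.Icc 1 n, P j θ
      = (r : ℂ) * ∑ p : (j : Fin n) → Fin (w (j.1 + 1)), e (F p * θ) := by
    intro θ
    have h1 : ∏ j ∈ Finset.Icc 1 n, P j θ = ∏ j : Fin n, P (j.1 + 1) θ := by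
      rw [← Finset.Ico_add_one_right_eq_Icc, Finset.prod_Ico_eq_prod_range]
      simp only [Nat.add_sub_cancel]
      rw [← Fin.prod_univ_eq_prod_range (fun i => P (1 + i) θ) n]
      exact Finset.prod_congr rfl (fun j _ => by rw [Nat.add_comm])
    rw [h1]
    have h2 : ∀ j : Fin n, P (j.1 + 1) θ
        = ((1 / Real.sqrt (w (j.1 + 1)) : ℝ) : ℂ)
          * ∑ kk : Fin (w (j.1 + 1)),
              e (((kk : ℕ) * h (j.1 + 1) + s (j.1 + 1) (kk : ℕ)) * θ) := by
      intro j
      rw [hP, Finset.sum_range (fun kk => e ((kk * h (j.1 + 1) + s (j.1 + 1) kk) * θ))]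
      push_cast
      try ring
    rw [Finset.prod_congr rfl (fun j _ => h2 j), Finset.prod_mul_distrib,
      ← Complex.ofReal_prod]
    congr 1
    rw [Finset.prod_univ_sum (fun j : Fin n => (Finset.univ : Finset (Fin (w (j.1 + 1)))))
      (fun j kk => e (((kk : ℕ) * h (j.1 + 1) + s (j.1 + 1) (kk : ℕ)) * θ)),
      Fintype.piFinset_univ]
    refine Finset.sum_congr rfl (fun p _ => ?_)
    unfold e
    rw [← Complex.exp_sum]
    congr 1
    rw [hF]
    push_cast
    rw [Finset.sum_mul, Finset.mul_sum]
  -- the integrand identity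
  have hkey : ∀ θ : ℝ, ((∏ j ∈ Finset.Icc 1 n, ‖P j θ‖ ^ 2 : ℝ) : ℂ)
      = ((W⁻¹ : ℝ) : ℂ) * ∑ p : (j : Fin n) → Fin (w (j.1 + 1)),
          ∑ q : (j : Fin n) → Fin (w (j.1 + 1)),
            e (F p * θ) * (starRingEnd ℂ) (e (F q * θ)) := by
    intro θ
    rw [Complex.ofReal_prod]
    have habs : ∀ j ∈ Finset.Icc 1 n,
        ((‖P j θ‖ ^ 2 : ℝ) : ℂ) = P j θ * (starRingEnd ℂ) (P j θ) := by
      intro j _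
      rw [Complex.mul_conj, Complex.normSq_eq_norm_sq]
    rw [Finset.prod_congr rfl habs, Finset.prod_mul_distrib, ← map_prod, hprod θ,
      map_mul, map_sum, Complex.conj_ofReal]
    have hrr : ((W⁻¹ : ℝ) : ℂ) = (r : ℂ) * r := by
      rw [← hr2]; push_cast; ring
    rw [hrr, ← Finset.sum_mul_sum]
    ring
  -- compute the complex integral
  have hcont : ∀ (p q : (j : Fin n) → Fin (w (j.1 + 1))),
      Continuous (fun θ : ℝ => e (F p * θ) * (starRingEnd ℂ) (e (F q * θ))) := by
    intro p q
    exact (continuous_e_mul _).mul ((continuous_e_mul _).star)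
  have hC : (∫ θ in (0:ℝ)..1,
      ((∏ j ∈ Finset.Icc 1 n, ‖P j θ‖ ^ 2 : ℝ) : ℂ)) = 1 := by
    rw [intervalIntegral.integral_congr (fun θ _ => hkey θ),
      intervalIntegral.integral_const_mul,
      intervalIntegral.integral_finset_sum (fun p _ =>
        (continuous_finset_sum _ (fun q _ => hcont p q)).intervalIntegrable 0 1)]
    have hswap : ∀ p ∈ (Finset.univ : Finset ((j : Fin n) → Fin (w (j.1 + 1)))),
        (∫ θ in (0:ℝ)..1, ∑ q : (j : Fin n) → Fin (w (j.1 + 1)),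
          e (F p * θ) * (starRingEnd ℂ) (e (F q * θ)))
        = ∑ q : (j : Fin n) → Fin (w (j.1 + 1)), if p = q then (1:ℂ) else 0 := by
      intro p _
      rw [intervalIntegral.integral_finset_sum (fun q _ =>
        (hcont p q).intervalIntegrable 0 1)]
      refine Finset.sum_congr rfl (fun q _ => ?_)
      rw [integral_e (F p) (F q)]
      congr 1
      simp [hinj.eq_iff]
    rw [Finset.sum_congr rfl hswap]
    simp only [Finset.sum_ite_eq, Finset.mem_univ, if_true, Finset.sum_const,
      Finset.card_univ, nsmul_eq_mul, mul_one]
    rw [Fintype.card_pi]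
    simp only [Fintype.card_fin]
    have : ((∏ j : Fin n, w (j.1 + 1) : ℕ) : ℂ) = (W : ℂ) := by
      rw [hWdef]
      push_cast
      rfl
    rw [this, ← Complex.ofReal_mul, inv_mul_cancel₀ hWpos.ne']
    norm_num
  rw [intervalIntegral.integral_ofReal] at hC
  exact_mod_cast hC
end

section
/- There is an absolute constant C such that the following holds. Let P be a trigonometric polynomial, ℓ ≥ 1 an integer, I ⊂ ℝ/ℤ an interval with |I| ≥ 1/ℓ, and k ≥ 0 an integer. Then ∫_I |P(θ)| · |∑_{j=0}^k e(jℓθ)| dθ ≤ C log(2+k) · ∫_I max_{|ψ| ≤ 1/ℓ} |P(θ+ψ)| dθ. -/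
open Finset intervalIntegral

lemma e_eq_pow (u : ℝ) (j : ℕ) : e (j * u) = (e u) ^ j := by
  rw [e, e, ← Complex.exp_nat_mul]; push_cast; ring_nf

lemma abs_e_sub_one (u : ℝ) :
    ‖e u - 1‖ = 2 * |Real.sin (Real.pi * u)| := by
  rw [e]
  have h : (2 * Real.pi * Complex.I * u) = ((2 * Real.pi * u : ℝ) : ℂ) * Complex.I := by
    push_cast; ring
  rw [h]
  have h2 : Complex.exp ((2*Real.pi*u : ℝ) * Complex.I) - 1
      = Complex.mk (Real.cos (2*Real.pi*u) - 1) (Real.sin (2*Real.pi*u)) := by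
    apply Complex.ext <;>
    simp only [Complex.sub_re, Complex.sub_im, Complex.one_re, Complex.one_im,
      Complex.exp_ofReal_mul_I_re, Complex.exp_ofReal_mul_I_im, sub_zero]
  rw [h2, Complex.norm_def, Complex.normSq_mk]
  have hs : Real.sin (Real.pi * u) ^ 2 = (1 - Real.cos (2 * Real.pi * u)) / 2 := by
    rw [Real.sin_sq_eq_half_sub]; ring_nf
  have hcos : (Real.cos (2*Real.pi*u) - 1) * (Real.cos (2*Real.pi*u) - 1)
      + Real.sin (2*Real.pi*u) * Real.sin (2*Real.pi*u)
      = (2 * |Real.sin (Real.pi * u)|)^2 := by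
    have hpy : Real.sin (2*Real.pi*u)^2 + Real.cos (2*Real.pi*u)^2 = 1 := Real.sin_sq_add_cos_sq _
    have habs : |Real.sin (Real.pi * u)|^2 = Real.sin (Real.pi*u)^2 := sq_abs _
    nlinarith [hs]
  rw [hcos, Real.sqrt_sq (by positivity)]

noncomputable def Dk (k : ℕ) (u : ℝ) : ℝ := ‖∑ j ∈ Finset.range (k+1), (e u)^j‖

lemma abs_e (u : ℝ) : ‖e u‖ = 1 := by
  rw [e]
  have : 2 * Real.pi * Complex.I * u = ((2*Real.pi*u : ℝ):ℂ) * Complex.I := by push_cast; ring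
  rw [this, Complex.norm_exp_ofReal_mul_I]

lemma Dk_nonneg (k : ℕ) (u : ℝ) : 0 ≤ Dk k u := norm_nonneg _

lemma Dk_le_card (k : ℕ) (u : ℝ) : Dk k u ≤ k + 1 := by
  refine le_trans (norm_sum_le _ _) ?_
  simp [map_pow, abs_e]

lemma Dk_le_inv_sin (k : ℕ) {u : ℝ} (hu : Real.sin (Real.pi * u) ≠ 0) :
    Dk k u ≤ 1 / |Real.sin (Real.pi * u)| := by
  have hne : e u ≠ 1 := by
    intro h
    have := abs_e_sub_one u
    rw [h] at this
    simp at this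
    exact hu (by rw [this])
  rw [Dk, geom_sum_eq hne, norm_div, abs_e_sub_one]
  rw [div_le_div_iff₀ (by positivity) (by positivity)]
  have h1 : ‖(e u)^(k+1) - 1‖ ≤ 2 := by
    refine le_trans (norm_sub_le _ _) ?_
    simp [map_pow, abs_e]
    norm_num
  calc ‖(e u)^(k+1) - 1‖ * |Real.sin (Real.pi * u)|
      ≤ 2 * |Real.sin (Real.pi * u)| := by
        apply mul_le_mul_of_nonneg_right h1 (abs_nonneg _)
    _ ≤ 1 * (2 * |Real.sin (Real.pi * u)|) := by ring_nf; rfl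

lemma continuous_e : Continuous e := by
  unfold e; fun_prop

lemma continuous_Dk (k : ℕ) : Continuous (Dk k) := by
  unfold Dk
  apply continuous_norm.comp
  exact continuous_finset_sum _ (fun j _ => (continuous_e.pow j))

lemma Dk_le_low (k : ℕ) {u : ℝ} (h0 : 0 < u) (h1 : u ≤ 1/2) : Dk k u ≤ 1/(2*u) := by
  have hs : Real.sin (Real.pi * u) ≥ 2 * u := by
    have := Real.mul_le_sin (x := Real.pi * u) (by positivity)
      (by nlinarith [Real.pi_pos])
    calc Real.sin (Real.pi*u) ≥ 2/Real.pi * (Real.pi * u) := this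
      _ = 2 * u := by field_simp
  have hpos : 0 < Real.sin (Real.pi * u) := lt_of_lt_of_le (by positivity) hs
  refine le_trans (Dk_le_inv_sin k (ne_of_gt hpos)) ?_
  rw [abs_of_pos hpos]
  apply one_div_le_one_div_of_le (by positivity) hs

lemma Dk_le_high (k : ℕ) {u : ℝ} (h0 : 1/2 ≤ u) (h1 : u < 1) : Dk k u ≤ 1/(2*(1-u)) := by
  have key : Real.sin (Real.pi * u) = Real.sin (Real.pi * (1 - u)) := by
    rw [show Real.pi * (1-u) = Real.pi - Real.pi * u by ring, Real.sin_pi_sub]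
  have hs : Real.sin (Real.pi * (1-u)) ≥ 2 * (1-u) := by
    have := Real.mul_le_sin (x := Real.pi * (1-u)) (by nlinarith [Real.pi_pos])
      (by nlinarith [Real.pi_pos])
    calc Real.sin (Real.pi*(1-u)) ≥ 2/Real.pi * (Real.pi * (1-u)) := this
      _ = 2 * (1-u) := by field_simp
  have hpos : 0 < Real.sin (Real.pi * (1-u)) := lt_of_lt_of_le (by nlinarith) hs
  refine le_trans (Dk_le_inv_sin k (by rw [key]; exact ne_of_gt hpos)) ?_
  rw [key, abs_of_pos hpos]
  apply one_div_le_one_div_of_le (by nlinarith) hs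

lemma Dk_intervalIntegrable (k : ℕ) (a b : ℝ) : IntervalIntegrable (Dk k) MeasureTheory.volume a b :=
  (continuous_Dk k).intervalIntegrable a b

lemma Dk_periodic (k : ℕ) : Function.Periodic (Dk k) 1 := by
  intro u
  unfold Dk
  congr 1
  apply Finset.sum_congr rfl
  intro j _
  congr 1
  rw [e, e]
  have : 2 * Real.pi * Complex.I * ((u : ℂ) + 1) = 2 * Real.pi * Complex.I * u + 2 * Real.pi * Complex.I := by push_cast; ring
  rw [show ((u+1 : ℝ) : ℂ) = (u : ℂ) + 1 by push_cast; ring, this, Complex.exp_add,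
    Complex.exp_two_pi_mul_I, mul_one]

lemma Dk_l1 (k : ℕ) : ∫ u in (0:ℝ)..1, Dk k u ≤ 1 + Real.log (k+1) := by
  set a : ℝ := 1/(2*((k:ℝ)+1)) with ha
  have hk1 : (1:ℝ) ≤ (k:ℝ)+1 := by
    have := Nat.cast_nonneg (α := ℝ) k; linarith
  have hapos : 0 < a := by rw [ha]; positivity
  have hale : a ≤ 1/2 := by
    rw [ha, div_le_div_iff₀ (by positivity) (by norm_num)]
    nlinarith
  have h12 : (1:ℝ)/2 ≤ 1 - a := by linarith
  have hsplit : ∫ u in (0:ℝ)..1, Dk k u =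
      (∫ u in (0:ℝ)..a, Dk k u) + (∫ u in a..(1/2:ℝ), Dk k u)
      + (∫ u in (1/2:ℝ)..(1-a), Dk k u) + (∫ u in (1-a)..(1:ℝ), Dk k u) := by
    rw [intervalIntegral.integral_add_adjacent_intervals (Dk_intervalIntegrable k 0 a) (Dk_intervalIntegrable k a (1/2)),
      intervalIntegral.integral_add_adjacent_intervals (Dk_intervalIntegrable k 0 (1/2)) (Dk_intervalIntegrable k (1/2) (1-a)),
      intervalIntegral.integral_add_adjacent_intervals (Dk_intervalIntegrable k 0 (1-a)) (Dk_intervalIntegrable k (1-a) 1)]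
  have h1 : (∫ u in (0:ℝ)..a, Dk k u) ≤ 1/2 := by
    have : (∫ u in (0:ℝ)..a, Dk k u) ≤ ∫ u in (0:ℝ)..a, ((k:ℝ)+1) := by
      apply intervalIntegral.integral_mono_on hapos.le (Dk_intervalIntegrable k 0 a)
        (intervalIntegrable_const)
      intro x _; exact Dk_le_card k x
    rw [intervalIntegral.integral_const, smul_eq_mul] at this
    calc (∫ u in (0:ℝ)..a, Dk k u) ≤ (a - 0) * ((k:ℝ)+1) := this
      _ = 1/2 := by rw [ha]; field_simp; ring
  have h4 : (∫ u in (1-a)..(1:ℝ), Dk k u) ≤ 1/2 := by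
    have : (∫ u in (1-a)..(1:ℝ), Dk k u) ≤ ∫ u in (1-a)..(1:ℝ), ((k:ℝ)+1) := by
      apply intervalIntegral.integral_mono_on (by linarith) (Dk_intervalIntegrable k _ _)
        (intervalIntegrable_const)
      intro x _; exact Dk_le_card k x
    rw [intervalIntegral.integral_const, smul_eq_mul] at this
    calc (∫ u in (1-a)..(1:ℝ), Dk k u) ≤ (1 - (1-a)) * ((k:ℝ)+1) := this
      _ = 1/2 := by rw [ha]; field_simp; ring
  have hint2 : IntervalIntegrable (fun u : ℝ => 1/(2*u)) MeasureTheory.volume a (1/2) := by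
    apply ContinuousOn.intervalIntegrable
    apply ContinuousOn.div continuousOn_const
    · fun_prop
    · intro x hx
      rw [Set.uIcc_of_le hale] at hx
      have : 0 < x := lt_of_lt_of_le hapos hx.1
      positivity
  have h2 : (∫ u in a..(1/2:ℝ), Dk k u) ≤ 1/2 * Real.log ((k:ℝ)+1) := by
    have hmono : (∫ u in a..(1/2:ℝ), Dk k u) ≤ ∫ u in a..(1/2:ℝ), 1/(2*u) := by
      apply intervalIntegral.integral_mono_on hale (Dk_intervalIntegrable k _ _) hint2
      intro x hx
      exact Dk_le_low k (lt_of_lt_of_le hapos hx.1) hx.2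
    have hcalc : (∫ u in a..(1/2:ℝ), 1/(2*u)) = 1/2 * Real.log ((k:ℝ)+1) := by
      have : ∀ u : ℝ, 1/(2*u) = (1/2) * (1/u) := by intro u; ring
      simp_rw [this]
      rw [intervalIntegral.integral_const_mul, integral_one_div]
      · congr 1
        rw [ha]
        rw [show (1:ℝ)/2 / (1/(2*((k:ℝ)+1))) = (k:ℝ)+1 by field_simp]
      · intro hmem
        rw [Set.uIcc_of_le hale] at hmem
        exact absurd hmem.1 (by linarith)
    linarith [hmono, hcalc.le, hcalc.ge]
  have h3 : (∫ u in (1/2:ℝ)..(1-a), Dk k u) ≤ 1/2 * Real.log ((k:ℝ)+1) := by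
    have hint3 : IntervalIntegrable (fun u : ℝ => 1/(2*(1-u))) MeasureTheory.volume (1/2) (1-a) := by
      apply ContinuousOn.intervalIntegrable
      apply ContinuousOn.div continuousOn_const
      · fun_prop
      · intro x hx
        rw [Set.uIcc_of_le h12] at hx
        have : x < 1 := lt_of_le_of_lt hx.2 (by linarith)
        have : 0 < 1 - x := by linarith
        positivity
    have hmono : (∫ u in (1/2:ℝ)..(1-a), Dk k u) ≤ ∫ u in (1/2:ℝ)..(1-a), 1/(2*(1-u)) := by
      apply intervalIntegral.integral_mono_on h12 (Dk_intervalIntegrable k _ _) hint3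
      intro x hx
      exact Dk_le_high k hx.1 (lt_of_le_of_lt hx.2 (by linarith))
    have hcomp : (∫ u in (1/2:ℝ)..(1-a), 1/(2*(1-u))) = ∫ u in a..(1/2:ℝ), 1/(2*u) := by
      rw [intervalIntegral.integral_comp_sub_left (fun v => 1/(2*v)) 1]
      norm_num
    have hcalc : (∫ u in a..(1/2:ℝ), 1/(2*u)) = 1/2 * Real.log ((k:ℝ)+1) := by
      have : ∀ u : ℝ, 1/(2*u) = (1/2) * (1/u) := by intro u; ring
      simp_rw [this]
      rw [intervalIntegral.integral_const_mul, integral_one_div]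
      · congr 1
        rw [ha, show (1:ℝ)/2 / (1/(2*((k:ℝ)+1))) = (k:ℝ)+1 by field_simp]
      · intro hmem
        rw [Set.uIcc_of_le hale] at hmem
        exact absurd hmem.1 (by linarith)
    linarith [hmono, hcomp.le, hcomp.ge, hcalc.le, hcalc.ge]
  rw [hsplit]
  linarith

lemma Dk_window (k : ℕ) {c d : ℝ} (hcd : c ≤ d) (h1 : d ≤ c + 1) :
    ∫ u in c..d, Dk k u ≤ ∫ u in (0:ℝ)..1, Dk k u := by
  have hsplit : ∫ u in c..(c+1), Dk k u
      = (∫ u in c..d, Dk k u) + ∫ u in d..(c+1), Dk k u :=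
    (intervalIntegral.integral_add_adjacent_intervals (Dk_intervalIntegrable k c d)
      (Dk_intervalIntegrable k d (c+1))).symm
  have hnn : 0 ≤ ∫ u in d..(c+1), Dk k u :=
    intervalIntegral.integral_nonneg h1 (fun u _ => Dk_nonneg k u)
  have hper : ∫ u in c..(c+1), Dk k u = ∫ u in (0:ℝ)..(0+1), Dk k u :=
    (Dk_periodic k).intervalIntegral_add_eq c 0
  rw [zero_add] at hper
  linarith

lemma e_add (x y : ℝ) : e (x + y) = e x * e y := by
  rw [e, e, e, ← Complex.exp_add]
  congr 1
  push_cast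
  ring

noncomputable def Pf (s : Finset ℤ) (cf : ℤ → ℂ) (θ : ℝ) : ℂ := ∑ m ∈ s, cf m * e (m * θ)

noncomputable def Mfun (s : Finset ℤ) (cf : ℤ → ℂ) (r : ℝ) (θ : ℝ) : ℝ :=
  ⨆ ψ : Set.Icc (-r) r, ‖∑ m ∈ s, cf m * e (m * (θ + (ψ : ℝ)))‖

variable {s : Finset ℤ} {cf : ℤ → ℂ} {r : ℝ}

lemma Pf_abs_le (θ : ℝ) : ‖Pf s cf θ‖ ≤ ∑ m ∈ s, ‖cf m‖ := by
  refine le_trans (norm_sum_le _ _) ?_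
  apply Finset.sum_le_sum
  intro m _
  rw [norm_mul, abs_e, mul_one]

lemma icc_nonempty (hr : 0 ≤ r) : Nonempty (Set.Icc (-r) r) :=
  ⟨⟨0, by constructor <;> linarith⟩⟩

lemma Mfun_le (hr : 0 ≤ r) (θ : ℝ) : Mfun s cf r θ ≤ ∑ m ∈ s, ‖cf m‖ := by
  haveI := icc_nonempty hr
  exact ciSup_le (fun ψ => Pf_abs_le _)

lemma Mfun_ge (hr : 0 ≤ r) (θ ψ : ℝ) (hψ : ψ ∈ Set.Icc (-r) r) :
    ‖Pf s cf (θ + ψ)‖ ≤ Mfun s cf r θ := by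
  haveI := icc_nonempty hr
  exact le_ciSup (f := fun ψ : Set.Icc (-r) r => ‖Pf s cf (θ + (ψ:ℝ))‖)
    ⟨∑ m ∈ s, ‖cf m‖, by rintro x ⟨ψ', rfl⟩; exact Pf_abs_le _⟩ ⟨ψ, hψ⟩

lemma Mfun_nonneg (hr : 0 ≤ r) (θ : ℝ) : 0 ≤ Mfun s cf r θ :=
  le_trans (norm_nonneg _) (Mfun_ge hr θ 0 ⟨by linarith, hr⟩)

lemma Mfun_key (hr : 0 ≤ r) (θ₁ θ₂ : ℝ) :
    Mfun s cf r θ₁ ≤ Mfun s cf r θ₂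
      + ∑ m ∈ s, ‖cf m‖ * ‖e (m*θ₁) - e (m*θ₂)‖ := by
  haveI := icc_nonempty hr
  apply ciSup_le
  intro ψ
  have hdiff : Pf s cf (θ₁ + ψ) - Pf s cf (θ₂ + ψ)
      = ∑ m ∈ s, cf m * e ((m:ℝ)*(ψ:ℝ)) * (e (m*θ₁) - e (m*θ₂)) := by
    rw [Pf, Pf, ← Finset.sum_sub_distrib]
    apply Finset.sum_congr rfl
    intro m _
    rw [show (m:ℝ)*(θ₁ + (ψ:ℝ)) = (m:ℝ)*θ₁ + (m:ℝ)*(ψ:ℝ) by ring,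
      show (m:ℝ)*(θ₂ + (ψ:ℝ)) = (m:ℝ)*θ₂ + (m:ℝ)*(ψ:ℝ) by ring, e_add, e_add]
    ring
  have habs : ‖Pf s cf (θ₁ + ψ) - Pf s cf (θ₂ + ψ)‖
      ≤ ∑ m ∈ s, ‖cf m‖ * ‖e (m*θ₁) - e (m*θ₂)‖ := by
    rw [hdiff]
    refine le_trans (norm_sum_le _ _) ?_
    apply Finset.sum_le_sum
    intro m _
    rw [norm_mul, norm_mul, abs_e, mul_one]
  calc ‖Pf s cf (θ₁ + ψ)‖
      ≤ ‖Pf s cf (θ₂ + ψ)‖ + ‖Pf s cf (θ₁ + ψ) - Pf s cf (θ₂ + ψ)‖ := by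
        have := norm_add_le (Pf s cf (θ₂ + ψ)) (Pf s cf (θ₁ + ψ) - Pf s cf (θ₂ + ψ))
        simpa using this
    _ ≤ Mfun s cf r θ₂ + ∑ m ∈ s, ‖cf m‖ * ‖e (m*θ₁) - e (m*θ₂)‖ :=
        add_le_add (Mfun_ge hr θ₂ ψ ψ.2) habs

lemma Mfun_continuous (hr : 0 ≤ r) : Continuous (Mfun s cf r) := by
  rw [continuous_iff_continuousAt]
  intro θ₀
  rw [ContinuousAt, tendsto_iff_dist_tendsto_zero]
  have hE : Continuous (fun θ => ∑ m ∈ s, ‖cf m‖ * ‖e (m*θ) - e (m*θ₀)‖) := by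
    apply continuous_finset_sum
    intro m _
    apply Continuous.mul continuous_const
    apply continuous_norm.comp
    exact (continuous_e.comp (continuous_const.mul continuous_id)).sub continuous_const
  apply squeeze_zero (fun θ => dist_nonneg)
    (g := fun θ => ∑ m ∈ s, ‖cf m‖ * ‖e (m*θ) - e (m*θ₀)‖)
  · intro θ
    rw [Real.dist_eq, abs_sub_le_iff]
    constructor
    · linarith [Mfun_key (s := s) (cf := cf) hr θ θ₀]
    · have := Mfun_key (s := s) (cf := cf) hr θ₀ θ
      have hsym : ∀ m : ℤ, ‖e (m*θ₀) - e (m*θ)‖ = ‖e (m*θ) - e (m*θ₀)‖ :=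
        fun m => norm_sub_rev _ _
      simp_rw [hsym] at this
      linarith
  · have h0 : (∑ m ∈ s, ‖cf m‖ * ‖e (m*θ₀) - e (m*θ₀)‖) = 0 := by
      simp
    have := hE.tendsto θ₀
    rwa [h0] at this

lemma continuous_Pf_abs (s : Finset ℤ) (cf : ℤ → ℂ) : Continuous (fun θ => ‖Pf s cf θ‖) := by
  apply continuous_norm.comp
  unfold Pf
  apply continuous_finset_sum
  intro m _
  exact continuous_const.mul (continuous_e.comp (continuous_const.mul continuous_id))

/-- Estimate (2.7) in the proof of Lemma 3: for any trigonometric polynomial `P`,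
integer `ℓ ≥ 1` and interval `I` with `|I| ≥ 1/ℓ`,
`∫_I |P(θ)| |∑_{j=0}^k e(jℓθ)| dθ ≤ C log(2+k) ∫_I max_{|ψ|≤1/ℓ} |P(θ+ψ)| dθ`. -/
theorem stmt_8 : ∃ C : ℝ, 0 < C ∧
    ∀ (s : Finset ℤ) (cf : ℤ → ℂ) (ℓ : ℕ) (t δ : ℝ) (k : ℕ),
      1 ≤ ℓ → 1 / (ℓ : ℝ) ≤ δ →
      (∫ θ in t..(t + δ),
          ‖∑ m ∈ s, cf m * e (m * θ)‖ *
            ‖∑ j ∈ Finset.range (k + 1), e (j * ℓ * θ)‖) ≤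
        C * Real.log (2 + k) *
          ∫ θ in t..(t + δ),
            ⨆ ψ : Set.Icc (-(1 / (ℓ : ℝ))) (1 / (ℓ : ℝ)),
              ‖∑ m ∈ s, cf m * e (m * (θ + (ψ : ℝ)))‖ := by
  refine ⟨6, by norm_num, ?_⟩
  intro s cf ℓ t δ k hℓ hδ
  have hℓpos : (0:ℝ) < ℓ := by exact_mod_cast hℓ
  set r : ℝ := 1/(ℓ:ℝ) with hr
  have hrpos : 0 < r := by rw [hr]; positivity
  have hδpos : 0 < δ := lt_of_lt_of_le hrpos hδ
  -- rewrite LHS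
  have hfact : ∀ θ : ℝ, ‖∑ j ∈ Finset.range (k + 1), e (j * ℓ * θ)‖ = Dk k (ℓ*θ) := by
    intro θ
    unfold Dk
    congr 1
    apply Finset.sum_congr rfl
    intro j _
    rw [mul_assoc, e_eq_pow]
  have hLHS : (∫ θ in t..(t + δ),
      ‖∑ m ∈ s, cf m * e (m * θ)‖ *
        ‖∑ j ∈ Finset.range (k + 1), e (j * ℓ * θ)‖)
      = ∫ θ in t..(t + δ), ‖Pf s cf θ‖ * Dk k (ℓ*θ) := by
    apply intervalIntegral.integral_congr
    intro θ _
    simp only []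
    rw [hfact θ]
    rfl
  have hRHS : (∫ θ in t..(t + δ),
      ⨆ ψ : Set.Icc (-(1 / (ℓ : ℝ))) (1 / (ℓ : ℝ)),
        ‖∑ m ∈ s, cf m * e (m * (θ + (ψ : ℝ)))‖)
      = ∫ θ in t..(t + δ), Mfun s cf r θ := rfl
  rw [hLHS, hRHS]
  -- setup
  set A : ℝ := ∫ u in (0:ℝ)..1, Dk k u with hA
  have hA0 : 0 ≤ A := intervalIntegral.integral_nonneg (by norm_num) (fun u _ => Dk_nonneg k u)
  have hAle : A ≤ 3 * Real.log (2 + k) := by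
    have h1 := Dk_l1 k
    have h2 : Real.log ((k:ℝ)+1) ≤ Real.log (2 + k) := by
      apply Real.log_le_log (by positivity)
      push_cast; linarith
    have h3 : Real.log 2 ≤ Real.log (2 + k) := by
      apply Real.log_le_log (by norm_num)
      have := Nat.cast_nonneg (α := ℝ) k; linarith
    have h4 : (0.6931471803 : ℝ) < Real.log 2 := Real.log_two_gt_d9
    linarith
  set n : ℕ := ⌈δ * ℓ⌉₊ with hn
  have hn1 : 1 ≤ n := by
    rw [hn]
    apply Nat.one_le_ceil_iff.mpr
    have : (1:ℝ) ≤ δ * ℓ := by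
      rw [hr] at hδ
      calc (1:ℝ) = (1/ℓ) * ℓ := by field_simp
        _ ≤ δ * ℓ := by apply mul_le_mul_of_nonneg_right hδ hℓpos.le
    linarith
  have hnpos : (0:ℝ) < n := by exact_mod_cast hn1
  have hge : δ * ℓ ≤ n := Nat.le_ceil _
  have hlt : (n:ℝ) ≤ 2 * (δ * ℓ) := by
    have h1 : (n:ℝ) < δ * ℓ + 1 := Nat.ceil_lt_add_one (by positivity)
    have h2 : (1:ℝ) ≤ δ * ℓ := le_trans (by
      calc (1:ℝ) = (1/ℓ) * ℓ := by field_simp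
        _ ≤ δ * ℓ := mul_le_mul_of_nonneg_right (hr ▸ hδ) hℓpos.le) (le_refl _)
    linarith
  set δ' : ℝ := δ / n with hδ'
  have hδ'pos : 0 < δ' := by rw [hδ']; positivity
  have hδ'le : δ' ≤ r := by
    rw [hδ', hr, div_le_div_iff₀ hnpos hℓpos]
    calc δ * ℓ ≤ (n:ℝ) := hge
      _ = 1 * n := (one_mul _).symm
  have hδ'ge : 1/(2*ℓ) ≤ δ' := by
    rw [hδ', div_le_div_iff₀ (by positivity) hnpos]
    calc 1 * (n:ℝ) ≤ 2 * (δ * ℓ) := by rw [one_mul]; exact hlt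
      _ = δ * (2*ℓ) := by ring
  set a : ℕ → ℝ := fun i => t + i * δ' with haf
  have hfc : Continuous (fun θ => ‖Pf s cf θ‖ * Dk k (ℓ*θ)) :=
    (continuous_Pf_abs s cf).mul ((continuous_Dk k).comp (continuous_const.mul continuous_id))
  have hMc : Continuous (Mfun s cf r) := Mfun_continuous hrpos.le
  have ha0 : a 0 = t := by simp [haf]
  have han : a n = t + δ := by
    rw [haf]
    simp only []
    rw [hδ']
    field_simp
  have hsum : ∑ i ∈ Finset.range n, ∫ θ in a i..a (i+1), ‖Pf s cf θ‖ * Dk k (ℓ*θ)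
      = ∫ θ in (a 0)..(a n), ‖Pf s cf θ‖ * Dk k (ℓ*θ) :=
    intervalIntegral.sum_integral_adjacent_intervals (fun i _ => hfc.intervalIntegrable _ _)
  have hsumM : ∑ i ∈ Finset.range n, ∫ θ in a i..a (i+1), Mfun s cf r θ
      = ∫ θ in (a 0)..(a n), Mfun s cf r θ :=
    intervalIntegral.sum_integral_adjacent_intervals (fun i _ => hMc.intervalIntegrable _ _)
  have hstep : ∀ i : ℕ, a (i+1) = a i + δ' := by
    intro i; rw [haf]; push_cast; ring
  have hii : ∀ i : ℕ, a i ≤ a (i+1) := fun i => by rw [hstep i]; linarith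
  -- per-piece estimate
  have piece : ∀ i : ℕ,
      (∫ θ in a i..a (i+1), ‖Pf s cf θ‖ * Dk k (ℓ*θ))
        ≤ 2 * A * ∫ θ in a i..a (i+1), Mfun s cf r θ := by
    intro i
    set Xi : ℝ := ∫ θ in a i..a (i+1), ‖Pf s cf θ‖ * Dk k (ℓ*θ) with hXi
    have hXi0 : 0 ≤ Xi :=
      intervalIntegral.integral_nonneg (hii i)
        (fun θ _ => mul_nonneg (norm_nonneg _) (Dk_nonneg _ _))
    have step1 : ∀ θ' ∈ Set.Icc (a i) (a (i+1)), Xi ≤ Mfun s cf r θ' * (A / ℓ) := by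
      intro θ' hθ'
      have hM0 : 0 ≤ Mfun s cf r θ' := Mfun_nonneg hrpos.le θ'
      have sub1 : Xi ≤ ∫ θ in a i..a (i+1), Mfun s cf r θ' * Dk k (ℓ*θ) := by
        rw [hXi]
        apply intervalIntegral.integral_mono_on (hii i) (hfc.intervalIntegrable _ _)
          ((continuous_const.mul ((continuous_Dk k).comp
            (continuous_const.mul continuous_id))).intervalIntegrable _ _)
        intro θ hθ
        apply mul_le_mul_of_nonneg_right _ (Dk_nonneg _ _)
        have hψ : θ - θ' ∈ Set.Icc (-r) r := by
          constructor
          · have : θ ≥ a i := hθ.1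
            have : θ' ≤ a (i+1) := hθ'.2
            rw [hstep i] at this
            have h1 : θ - θ' ≥ -δ' := by linarith [hθ.1]
            linarith [hδ'le]
          · have h2 : θ - θ' ≤ δ' := by
              have := hθ.2; rw [hstep i] at this
              linarith [hθ'.1]
            linarith [hδ'le]
        have := Mfun_ge (s := s) (cf := cf) hrpos.le θ' (θ - θ') hψ
        rwa [add_sub_cancel] at this
      have sub2 : (∫ θ in a i..a (i+1), Mfun s cf r θ' * Dk k (ℓ*θ))
          = Mfun s cf r θ' * ((ℓ:ℝ)⁻¹ * ∫ u in (ℓ*a i)..(ℓ*a (i+1)), Dk k u) := by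
        rw [intervalIntegral.integral_const_mul]
        congr 1
        rw [intervalIntegral.integral_comp_mul_left (Dk k) (ne_of_gt hℓpos)]
        simp [smul_eq_mul]
      have sub3 : (∫ u in ((ℓ:ℝ)*a i)..((ℓ:ℝ)*a (i+1)), Dk k u) ≤ A := by
        apply Dk_window
        · apply mul_le_mul_of_nonneg_left (hii i) hℓpos.le
        · rw [hstep i]
          have : (ℓ:ℝ) * δ' ≤ 1 := by
            calc (ℓ:ℝ) * δ' ≤ (ℓ:ℝ) * r := mul_le_mul_of_nonneg_left hδ'le hℓpos.le
              _ = 1 := by rw [hr]; field_simp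
          nlinarith
      calc Xi ≤ Mfun s cf r θ' * ((ℓ:ℝ)⁻¹ * ∫ u in (ℓ*a i)..(ℓ*a (i+1)), Dk k u) := by
            rw [← sub2]; exact sub1
        _ ≤ Mfun s cf r θ' * ((ℓ:ℝ)⁻¹ * A) := by
            apply mul_le_mul_of_nonneg_left _ hM0
            apply mul_le_mul_of_nonneg_left sub3 (by positivity)
        _ = Mfun s cf r θ' * (A / ℓ) := by rw [div_eq_inv_mul]
    have hIM0 : 0 ≤ ∫ θ in a i..a (i+1), Mfun s cf r θ :=
      intervalIntegral.integral_nonneg (hii i) (fun θ _ => Mfun_nonneg hrpos.le θ)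
    have step2 : Xi * δ' ≤ (A / ℓ) * ∫ θ in a i..a (i+1), Mfun s cf r θ := by
      have hmono : (∫ _θ' in a i..a (i+1), Xi) ≤ ∫ θ' in a i..a (i+1), Mfun s cf r θ' * (A / ℓ) := by
        apply intervalIntegral.integral_mono_on (hii i) intervalIntegrable_const
          ((hMc.mul continuous_const).intervalIntegrable _ _)
        exact step1
      have hgap : a (i+1) - a i = δ' := by rw [hstep i]; ring
      rw [intervalIntegral.integral_const, intervalIntegral.integral_mul_const, smul_eq_mul,
        hgap] at hmono
      calc Xi * δ' = δ' * Xi := by ring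
        _ ≤ (∫ θ in a i..a (i+1), Mfun s cf r θ) * (A / ℓ) := hmono
        _ = (A / ℓ) * ∫ θ in a i..a (i+1), Mfun s cf r θ := by ring
    -- conclude Xi ≤ 2 A ∫ M
    set IM : ℝ := ∫ θ in a i..a (i+1), Mfun s cf r θ with hIM
    have h5 : Xi * (1/(2*(ℓ:ℝ))) ≤ (A/ℓ) * IM :=
      le_trans (mul_le_mul_of_nonneg_left hδ'ge hXi0) step2
    have h6 : Xi * (1/(2*(ℓ:ℝ))) * (2*ℓ) ≤ (A/ℓ) * IM * (2*ℓ) :=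
      mul_le_mul_of_nonneg_right h5 (by positivity)
    calc Xi = Xi * (1/(2*(ℓ:ℝ))) * (2*ℓ) := by field_simp
      _ ≤ (A/ℓ) * IM * (2*ℓ) := h6
      _ = 2 * A * IM := by field_simp
  -- sum up
  rw [ha0, han] at hsum hsumM
  rw [← hsum]
  have htot : ∑ i ∈ Finset.range n, (∫ θ in a i..a (i+1), ‖Pf s cf θ‖ * Dk k (ℓ*θ))
      ≤ ∑ i ∈ Finset.range n, 2 * A * ∫ θ in a i..a (i+1), Mfun s cf r θ :=
    Finset.sum_le_sum (fun i _ => piece i)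
  have hIMtot : 0 ≤ ∫ θ in t..(t+δ), Mfun s cf r θ :=
    intervalIntegral.integral_nonneg (by linarith) (fun θ _ => Mfun_nonneg hrpos.le θ)
  calc (∑ i ∈ Finset.range n, ∫ θ in a i..a (i+1), ‖Pf s cf θ‖ * Dk k (ℓ*θ))
      ≤ ∑ i ∈ Finset.range n, 2 * A * ∫ θ in a i..a (i+1), Mfun s cf r θ := htot
    _ = 2 * A * ∑ i ∈ Finset.range n, ∫ θ in a i..a (i+1), Mfun s cf r θ := by
        rw [Finset.mul_sum]
    _ = 2 * A * ∫ θ in t..(t+δ), Mfun s cf r θ := by rw [hsumM]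
    _ ≤ 6 * Real.log (2 + k) * ∫ θ in t..(t+δ), Mfun s cf r θ := by
        apply mul_le_mul_of_nonneg_right _ hIMtot
        linarith
end
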